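/- Let M be a Hausdorff smooth manifold, let X and Y be continuous vector fields on M, and let F ⊆ M be a compact subset. For each c ∈ ℝ set Z(c) = { x ∈ F : X(x) = c · Y(x) }. Then the set of parameters c ∈ ℝ at which Z is continuous — meaning that Z is both upper semi-continuous and lower semi-continuous at c — is a residual subset of ℝ. -/

import Mathlib

open Set Filter

open Metric TopologicalSpace Topology

section AuxCollinearity

lemma aux_core_collin {M : Type*} [TopologicalSpace M] (G : Set (ℝ × M)) (hG : IsClosed G)
    (F : Set M) (hF : IsCompact F) (hGF : ∀ p ∈ G, p.2 ∈ F)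
    (C : Set (Set M)) (hC : C.Countable)
    (hbase : ∀ x ∈ F, ∀ V : Set M, IsOpen V → x ∈ V →
      ∃ W ∈ C, x ∈ W ∧ closure W ∩ F ⊆ V) :
    {c₀ : ℝ | ∀ V : Set M, IsOpen V → (∃ x, (c₀, x) ∈ G ∧ x ∈ V) →
      ∃ δ > 0, ∀ c : ℝ, |c - c₀| < δ → ∃ x, (c, x) ∈ G ∧ x ∈ V} ∈ residual ℝ := by
  classical
  set S : Set M → Set ℝ := fun W => {c : ℝ | ∃ x ∈ closure W, (c, x) ∈ G} with hSdef
  have hSclosed : ∀ W : Set M, IsClosed (S W) := by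
    intro W
    rw [← closure_subset_iff_isClosed]
    intro c₀ hc₀
    set K : Set M := closure W ∩ F with hK
    have hKc : IsCompact K := hF.inter_left isClosed_closure
    have hCc : IsCompact ((Icc (c₀ - 1) (c₀ + 1) ×ˢ K) ∩ G) :=
      (isCompact_Icc.prod hKc).inter_right hG
    have himg : IsCompact (Prod.fst '' ((Icc (c₀ - 1) (c₀ + 1) ×ˢ K) ∩ G)) :=
      hCc.image continuous_fst
    have hcl : c₀ ∈ closure (Prod.fst '' ((Icc (c₀ - 1) (c₀ + 1) ×ˢ K) ∩ G)) := by
      rw [_root_.mem_closure_iff] at hc₀ ⊢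
      intro o ho hc₀o
      obtain ⟨c, ⟨hco, hcball⟩, x, hxW, hxG⟩ :=
        hc₀ (o ∩ ball c₀ 1) (ho.inter isOpen_ball) ⟨hc₀o, mem_ball_self one_pos⟩
      refine ⟨c, hco, (c, x), ⟨⟨?_, hxW, hGF _ hxG⟩, hxG⟩, rfl⟩
      have : |c - c₀| < 1 := by rwa [← Real.dist_eq]
      constructor <;> [linarith [abs_le.1 this.le |>.1]; linarith [abs_le.1 this.le |>.2]]
    rw [himg.isClosed.closure_eq] at hcl
    obtain ⟨⟨c, x⟩, ⟨⟨-, hxK, -⟩, hxG⟩, hceq⟩ := hcl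
    exact ⟨x, by simpa [← hceq] using ⟨hxK, hxG⟩⟩
  have hres : (⋂ W ∈ C, (frontier (S W))ᶜ) ∈ residual ℝ := by
    refine (countable_bInter_mem hC).2 fun W hW => residual_of_dense_open
      isClosed_frontier.isOpen_compl ?_
    rw [← interior_eq_empty_iff_dense_compl]
    exact interior_frontier (hSclosed W)
  refine mem_of_superset hres ?_
  intro c₀ hc₀ V hV ⟨x, hxG, hxV⟩
  have hxF : x ∈ F := hGF _ hxG
  obtain ⟨W, hWC, hxW, hWsub⟩ := hbase x hxF V hV hxV
  have hc₀S : c₀ ∈ S W := ⟨x, subset_closure hxW, hxG⟩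
  have hfr : c₀ ∉ frontier (S W) := by
    simp only [mem_iInter, mem_compl_iff] at hc₀
    exact hc₀ W hWC
  have hint : c₀ ∈ interior (S W) := by
    by_contra hni
    exact hfr ⟨subset_closure hc₀S, hni⟩
  rw [mem_interior_iff_mem_nhds, Metric.mem_nhds_iff] at hint
  obtain ⟨ε, hε, hball⟩ := hint
  refine ⟨ε, hε, fun c hc => ?_⟩
  have hcS : c ∈ S W := hball (by rwa [mem_ball, Real.dist_eq])
  obtain ⟨x', hx'W, hx'G⟩ := hcS
  exact ⟨x', hx'G, hWsub ⟨hx'W, hGF _ hx'G⟩⟩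

variable {E : Type*} [NormedAddCommGroup E] [NormedSpace ℝ E]
    {H : Type*} [TopologicalSpace H] {I : ModelWithCorners ℝ E H}
    {M : Type*} [TopologicalSpace M] [ChartedSpace H M]

include I in
lemma aux_chart_collin (x : M) :
    ∃ (U : Set M) (e : M → E), IsOpen U ∧ x ∈ U ∧ ContinuousOn e U ∧
    ∀ y ∈ U, ∀ O : Set M, IsOpen O → y ∈ O →
      ∃ r > 0, ∀ z ∈ U, dist (e z) (e y) < r → z ∈ O := by
  classical
  set φ := chartAt H x with hφ
  refine ⟨φ.source, fun z => I (φ z), φ.open_source, mem_chart_source H x,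
    I.continuous.comp_continuousOn φ.continuousOn, ?_⟩
  intro y hy O hO hyO
  set S : Set E := (fun z => I (φ z)) '' φ.source with hS
  have hmaps : MapsTo I.symm S φ.target := by
    rintro w ⟨z, hz, rfl⟩
    simpa [I.left_inv] using φ.map_source hz
  have h1 : ContinuousWithinAt φ.symm φ.target (I.symm (I (φ y))) := by
    rw [I.left_inv]
    exact φ.continuousOn_symm _ (φ.map_source hy)
  have hψ : ContinuousWithinAt (fun w => φ.symm (I.symm w)) S (I (φ y)) :=
    h1.comp I.continuous_symm.continuousWithinAt hmaps
  have hmem : O ∈ 𝓝 (φ.symm (I.symm (I (φ y)))) := by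
    rw [I.left_inv, φ.left_inv hy]
    exact hO.mem_nhds hyO
  have hpre : (fun w => φ.symm (I.symm w)) ⁻¹' O ∈ 𝓝[S] (I (φ y)) := hψ hmem
  rw [mem_nhdsWithin] at hpre
  obtain ⟨u, hu_open, hu_mem, hu_sub⟩ := hpre
  obtain ⟨r, hr, hball⟩ := Metric.isOpen_iff.1 hu_open _ hu_mem
  refine ⟨r, hr, fun z hz hdist => ?_⟩
  have h2 : I (φ z) ∈ u ∩ S := ⟨hball (Metric.mem_ball.2 hdist), ⟨z, hz, rfl⟩⟩
  have h3 := hu_sub h2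
  simp only [mem_preimage] at h3
  rwa [I.left_inv, φ.left_inv hz] at h3

variable [IsManifold I (⊤ : ℕ∞) M] [T2Space M]

omit [T2Space M] in
lemma aux_graph_closed_collin (X Y : ∀ x : M, TangentSpace I x)
    (hX : Continuous fun x : M => (⟨x, X x⟩ : TangentBundle I M))
    (hY : Continuous fun x : M => (⟨x, Y x⟩ : TangentBundle I M))
    (F : Set M) (hFc : IsClosed F) :
    IsClosed {p : ℝ × M | p.2 ∈ F ∧ X p.2 = p.1 • Y p.2} := by
  rw [← isOpen_compl_iff, isOpen_iff_forall_mem_open]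
  rintro ⟨c, x⟩ hp
  by_cases hxF : x ∈ F
  · have hne : X x ≠ c • Y x := fun h => hp ⟨hxF, h⟩
    set e := trivializationAt E (TangentSpace I) x with he
    have hxb : x ∈ e.baseSet := FiberBundle.mem_baseSet_trivializationAt E (TangentSpace I) x
    set fX : M → E := fun y => (e ⟨y, X y⟩).2 with hfXdef
    set fY : M → E := fun y => (e ⟨y, Y y⟩).2 with hfYdef
    have hfX : ContinuousOn fX e.baseSet := by
      apply continuous_snd.comp_continuousOn
      exact e.continuousOn.comp hX.continuousOn (fun y hy => e.mem_source.2 hy)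
    have hfY : ContinuousOn fY e.baseSet := by
      apply continuous_snd.comp_continuousOn
      exact e.continuousOn.comp hY.continuousOn (fun y hy => e.mem_source.2 hy)
    have key : ∀ y, y ∈ e.baseSet → ∀ c' : ℝ, (X y = c' • Y y ↔ fX y = c' • fY y) := by
      intro y hy c'
      have h1 : ∀ v : TangentSpace I y, e.continuousLinearEquivAt ℝ y hy v = (e ⟨y, v⟩).2 :=
        fun v => rfl
      constructor
      · intro h
        have := congrArg (e.continuousLinearEquivAt ℝ y hy) h
        rwa [map_smul, h1, h1] at this
      · intro h
        apply (e.continuousLinearEquivAt ℝ y hy).injective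
        rw [map_smul, h1, h1]
        exact h
    refine ⟨(univ ×ˢ e.baseSet) ∩ (fun p : ℝ × M => (fX p.2, p.1 • fY p.2)) ⁻¹' (diagonal E)ᶜ,
      ?_, ?_, ?_⟩
    · rintro ⟨c', z⟩ ⟨⟨-, hzb⟩, hd⟩ ⟨hzF, heq⟩
      exact hd ((key z hzb c').1 heq)
    · apply ContinuousOn.isOpen_inter_preimage ?_ (isOpen_univ.prod e.open_baseSet)
        isClosed_diagonal.isOpen_compl
      apply ContinuousOn.prodMk
      · exact hfX.comp continuous_snd.continuousOn (fun p hp => hp.2)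
      · exact ContinuousOn.smul continuous_fst.continuousOn
          (hfY.comp continuous_snd.continuousOn (fun p hp => hp.2))
    · exact ⟨⟨trivial, hxb⟩, fun hd => hne ((key x hxb c).2 hd)⟩
  · exact ⟨univ ×ˢ Fᶜ, fun p hp hpG => hp.2 hpG.1, isOpen_univ.prod hFc.isOpen_compl,
      ⟨trivial, hxF⟩⟩

include I in
/-- A compact set in a Hausdorff charted space admits a countable family of sets that acts as a
"neighborhood basis with small closures" for points of `F`. -/
lemma aux_countable_family_collin (F : Set M) (hF : IsCompact F) :
    ∃ C : Set (Set M), C.Countable ∧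
      ∀ x ∈ F, ∀ V : Set M, IsOpen V → x ∈ V → ∃ W ∈ C, x ∈ W ∧ closure W ∩ F ⊆ V := by
  classical
  -- chart data around every point
  choose U eE hUopen hxU heCont hloc using fun x : M => aux_chart_collin (I := I) x
  -- finite subcover of charts
  obtain ⟨t, ht⟩ := hF.elim_finite_subcover U hUopen
    (fun y hy => mem_iUnion.2 ⟨y, hxU y⟩)
  -- shrink: around each point of F, an open set whose closure ∩ F sits in one chart
  have step : ∀ y ∈ F, ∃ O : Set M, IsOpen O ∧ y ∈ O ∧
      ∃ j, j ∈ t ∧ closure O ∩ F ⊆ U j := by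
    intro y hy
    obtain ⟨j, hjt, hyUj⟩ := mem_iUnion₂.1 (ht hy)
    have hcomp : IsCompact (F \ U j) := hF.diff (hUopen j)
    have hynot : y ∉ F \ U j := fun h => h.2 hyUj
    obtain ⟨V₁, V₂, hV₁, hV₂, hsub, hyV₂, hdisj⟩ := hcomp.separation_of_notMem hynot
    refine ⟨V₂, hV₂, hyV₂, j, hjt, ?_⟩
    intro z hz
    by_contra hzU
    have hzFU : z ∈ F \ U j := ⟨hz.2, hzU⟩
    have : z ∈ V₁ᶜ := by
      have hcl : closure V₂ ⊆ V₁ᶜ :=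
        closure_minimal (fun w hw hw1 => disjoint_left.1 hdisj hw1 hw) hV₁.isClosed_compl
      exact hcl hz.1
    exact this (hsub hzFU)
  choose! O hOopen hyO j hjt hOsub using step
  -- finite cover of F by the shrunken sets
  obtain ⟨s, hsF, hsfin, hscov⟩ := hF.elim_finite_subcover_image
    (fun y (hy : y ∈ F) => hOopen y hy) (fun y hy => mem_biUnion hy (hyO y hy))
  -- countable dense subsets of the images of the compact pieces
  have hsep : ∀ y ∈ s, ∃ D : Set E, D.Countable ∧
      eE (j y) '' (closure (O y) ∩ F) ⊆ closure D := by
    intro y hy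
    have hA : IsCompact (closure (O y) ∩ F) := hF.inter_left isClosed_closure
    have himg : IsCompact (eE (j y) '' (closure (O y) ∩ F)) :=
      hA.image_of_continuousOn ((heCont (j y)).mono (hOsub y (hsF hy)))
    obtain ⟨D, hDc, hDd⟩ := himg.isSeparable
    exact ⟨D, hDc, hDd⟩
  choose! D hDc hDd using hsep
  refine ⟨⋃ y ∈ s, (fun p : E × ℚ =>
      {z | z ∈ U (j y) ∧ dist (eE (j y) z) p.1 < (p.2 : ℝ)}) '' ((D y) ×ˢ (univ : Set ℚ)),
    ?_, ?_⟩
  · exact Countable.biUnion hsfin.countable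
      (fun y hy => (((hDc y hy).prod countable_univ)).image _)
  · intro x hxF V hV hxV
    -- separate x from F \ V
    have hxnot : x ∉ F \ V := fun h => h.2 hxV
    obtain ⟨V₁, V₂, hV₁, hV₂, hsubF, hxV₂, hdisj⟩ :=
      ((hF.diff hV).separation_of_notMem hxnot)
    have hclV₂ : closure V₂ ∩ F ⊆ V := by
      intro z hz
      by_contra hzV
      have h1 : z ∈ V₁ :=
        hsubF ⟨hz.2, hzV⟩
      have h2 : closure V₂ ⊆ V₁ᶜ :=
        closure_minimal (fun w hw hw1 => disjoint_left.1 hdisj hw1 hw) hV₁.isClosed_compl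
      exact h2 hz.1 h1
    -- find the shrunken piece containing x
    obtain ⟨y, hy, hxO⟩ := mem_iUnion₂.1 (hscov hxF)
    have hxA : x ∈ closure (O y) ∩ F := ⟨subset_closure hxO, hxF⟩
    have hxU' : x ∈ U (j y) := hOsub y (hsF hy) hxA
    obtain ⟨r, hr, hloc'⟩ := hloc (j y) x hxU' (V₂ ∩ U (j y))
      (hV₂.inter (hUopen (j y))) ⟨hxV₂, hxU'⟩
    obtain ⟨q, hq0, hq⟩ : ∃ q : ℚ, (0:ℝ) < q ∧ (q:ℝ) < r / 2 := by
      obtain ⟨q, hq1, hq2⟩ := exists_rat_btwn (half_pos hr)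
      exact ⟨q, hq1, hq2⟩
    have hxcl : eE (j y) x ∈ closure (D y) := hDd y hy ⟨x, hxA, rfl⟩
    obtain ⟨d, hd, hdd⟩ := Metric.mem_closure_iff.1 hxcl (q : ℝ) hq0
    refine ⟨{z | z ∈ U (j y) ∧ dist (eE (j y) z) d < (q : ℝ)}, ?_, ⟨hxU', hdd⟩, ?_⟩
    · exact mem_biUnion hy ⟨(d, q), ⟨hd, trivial⟩, rfl⟩
    · have hWV₂ : {z | z ∈ U (j y) ∧ dist (eE (j y) z) d < (q : ℝ)} ⊆ V₂ := by
        rintro z ⟨hzU, hzd⟩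
        have : dist (eE (j y) z) (eE (j y) x) < r := by
          calc dist (eE (j y) z) (eE (j y) x)
              ≤ dist (eE (j y) z) d + dist d (eE (j y) x) := dist_triangle _ _ _
            _ < q + q := by rw [dist_comm d]; exact add_lt_add hzd hdd
            _ < r := by linarith
        exact (hloc' z hzU this).1
      exact fun z hz => hclV₂ ⟨closure_mono hWV₂ hz.1, hz.2⟩

end AuxCollinearity


/-- For continuous vector fields `X, Y` on a Hausdorff smooth manifold `M` and a compact
set `F ⊆ M`, the set of parameters `c₀ ∈ ℝ` at which the set-valued map
`c ↦ {x ∈ F | X x = c • Y x}` is continuous (i.e. both upper and lower semi-continuous)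
is residual in `ℝ`. -/
theorem collinearity_locus_continuity_points_residual
    {E : Type*} [NormedAddCommGroup E] [NormedSpace ℝ E]
    {H : Type*} [TopologicalSpace H] (I : ModelWithCorners ℝ E H)
    {M : Type*} [TopologicalSpace M] [ChartedSpace H M] [IsManifold I (⊤ : ℕ∞) M]
    [T2Space M]
    (X Y : ∀ x : M, TangentSpace I x)
    (hX : Continuous fun x : M => (⟨x, X x⟩ : TangentBundle I M))
    (hY : Continuous fun x : M => (⟨x, Y x⟩ : TangentBundle I M))
    (F : Set M) (hF : IsCompact F) :
    {c₀ : ℝ |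
      (∀ V : Set M, IsOpen V → {x | x ∈ F ∧ X x = c₀ • Y x} ⊆ V →
        ∃ δ > 0, ∀ c : ℝ, |c - c₀| < δ → {x | x ∈ F ∧ X x = c • Y x} ⊆ V) ∧
      (∀ V : Set M, IsOpen V → (V ∩ {x | x ∈ F ∧ X x = c₀ • Y x}).Nonempty →
        ∃ δ > 0, ∀ c : ℝ, |c - c₀| < δ → ({x | x ∈ F ∧ X x = c • Y x} ∩ V).Nonempty)}
      ∈ residual ℝ := by
  classical
  set G : Set (ℝ × M) := {p : ℝ × M | p.2 ∈ F ∧ X p.2 = p.1 • Y p.2} with hGdef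
  have hGc : IsClosed G := aux_graph_closed_collin X Y hX hY F hF.isClosed
  -- upper semicontinuity holds at every parameter
  have husc : ∀ c₀ : ℝ, ∀ V : Set M, IsOpen V → {x | x ∈ F ∧ X x = c₀ • Y x} ⊆ V →
      ∃ δ > 0, ∀ c : ℝ, |c - c₀| < δ → {x | x ∈ F ∧ X x = c • Y x} ⊆ V := by
    intro c₀ V hV hsub
    set Cmp : Set (ℝ × M) := (Icc (c₀ - 1) (c₀ + 1) ×ˢ (F \ V)) ∩ G with hCmpdef
    have hCmp : IsCompact Cmp := (isCompact_Icc.prod (hF.diff hV)).inter_right hGc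
    have himg : IsCompact (Prod.fst '' Cmp) := hCmp.image continuous_fst
    have hc₀ : c₀ ∉ Prod.fst '' Cmp := by
      rintro ⟨p, ⟨⟨hcI, hxFV⟩, hxG⟩, hp⟩
      refine hxFV.2 (hsub ⟨hxG.1, ?_⟩)
      rw [← hp]
      exact hxG.2
    obtain ⟨δ₀, hδ₀, hball⟩ := Metric.isOpen_iff.1 himg.isClosed.isOpen_compl c₀ hc₀
    refine ⟨min δ₀ 1, lt_min hδ₀ one_pos, fun c hc x hx => ?_⟩
    by_contra hxV
    have h1 : |c - c₀| < δ₀ := lt_of_lt_of_le hc (min_le_left _ _)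
    have h2 : |c - c₀| ≤ 1 := le_of_lt (lt_of_lt_of_le hc (min_le_right _ _))
    have hmemC : (c, x) ∈ Cmp :=
      ⟨⟨⟨by linarith [(abs_le.1 h2).1], by linarith [(abs_le.1 h2).2]⟩, ⟨hx.1, hxV⟩⟩,
        ⟨hx.1, hx.2⟩⟩
    exact hball (by rwa [mem_ball, Real.dist_eq]) ⟨(c, x), hmemC, rfl⟩
  -- lower semicontinuity is residual
  obtain ⟨C, hCc, hbase⟩ := aux_countable_family_collin (I := I) F hF
  have hlsc := aux_core_collin G hGc F hF (fun p hp => hp.1) C hCc hbase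
  refine mem_of_superset hlsc ?_
  intro c₀ h
  refine ⟨husc c₀, ?_⟩
  rintro V hV ⟨x, hxV, hxF, hxEq⟩
  obtain ⟨δ, hδ, hh⟩ := h V hV ⟨x, ⟨hxF, hxEq⟩, hxV⟩
  refine ⟨δ, hδ, fun c hc => ?_⟩
  obtain ⟨x', hx'G, hx'V⟩ := hh c hc
  exact ⟨x', ⟨hx'G.1, hx'G.2⟩, hx'V⟩
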